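/- (Proposition 3) The posterior covariance contracts at a linear rate: tr(Σ_m Σ₀⁻¹) = d − m. -/

import Mathlib

open Matrix

/-- **Proposition 3.** The posterior covariance contracts at a linear rate:
`tr(Σ_m Σ₀⁻¹) = d − m`. -/
theorem posterior_covariance_trace
    (d m : ℕ) (hm : m ≤ d)
    (A : Matrix (Fin d) (Fin d) ℝ) (hA : IsUnit A)
    (Sigma0 : Matrix (Fin d) (Fin d) ℝ) (hSigma0 : Sigma0.PosDef)
    (S : Matrix (Fin d) (Fin m) ℝ)
    (hS : LinearIndependent ℝ (fun j : Fin m => fun i : Fin d => S i j))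
    (Λm : Matrix (Fin m) (Fin m) ℝ) (hΛm : Λm = Sᵀ * A * Sigma0 * Aᵀ * S)
    (Sigmam : Matrix (Fin d) (Fin d) ℝ)
    (hSigmam : Sigmam = Sigma0 - Sigma0 * Aᵀ * S * Λm⁻¹ * Sᵀ * A * Sigma0) :
    (Sigmam * Sigma0⁻¹).trace = (d : ℝ) - (m : ℝ) := by
  -- M = Aᵀ S has injective mulVec
  set M : Matrix (Fin d) (Fin m) ℝ := Aᵀ * S with hM
  have hSinj : Function.Injective S.mulVec := Matrix.mulVec_injective_iff.mpr hS
  have hAT : IsUnit Aᵀ := (Matrix.isUnit_transpose A).mpr hA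
  have hATinj : Function.Injective Aᵀ.mulVec := Matrix.mulVec_injective_iff_isUnit.mpr hAT
  have hMinj : Function.Injective M.mulVec := by
    intro x y hxy
    apply hSinj
    apply hATinj
    simpa [hM, Matrix.mulVec_mulVec] using hxy
  -- Λm = Mᵀ Σ₀ M is positive definite
  have hΛM : Λm = Mᵀ * Sigma0 * M := by
    rw [hΛm, hM]
    simp [Matrix.transpose_mul, Matrix.mul_assoc]
  have hΛpd : Λm.PosDef := by
    rw [hΛM, Matrix.posDef_iff_dotProduct_mulVec]
    constructor
    · have := hSigma0.posSemidef.conjTranspose_mul_mul_same M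
      simpa using this.1
    · intro x hx
      have hMx : M *ᵥ x ≠ 0 := fun h => hx (hMinj (by simpa using h))
      have := (Matrix.posDef_iff_dotProduct_mulVec.mp hSigma0).2 hMx
      simpa only [star_mulVec, Matrix.dotProduct_mulVec, Matrix.vecMul_vecMul,
        Matrix.conjTranspose_eq_transpose_of_trivial, Matrix.mul_assoc] using this
  have hΛunit : IsUnit Λm.det := hΛpd.isUnit.map (Matrix.detMonoidHom)
  have hS0unit : IsUnit Sigma0.det := hSigma0.isUnit.map (Matrix.detMonoidHom)
  -- expand
  have key : Sigmam * Sigma0⁻¹ = 1 - Sigma0 * Aᵀ * S * Λm⁻¹ * Sᵀ * A := by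
    rw [hSigmam, Matrix.sub_mul, Matrix.mul_nonsing_inv _ hS0unit]
    congr 1
    rw [Matrix.mul_assoc (Sigma0 * Aᵀ * S * Λm⁻¹ * Sᵀ * A) Sigma0 Sigma0⁻¹,
      Matrix.mul_nonsing_inv _ hS0unit, Matrix.mul_one]
  rw [key, Matrix.trace_sub, Matrix.trace_one]
  have h2 : Sigma0 * Aᵀ * S * Λm⁻¹ * Sᵀ * A = (Sigma0 * Aᵀ * S * Λm⁻¹) * (Sᵀ * A) := by
    simp only [Matrix.mul_assoc]
  have h3 : (Sᵀ * A) * (Sigma0 * Aᵀ * S * Λm⁻¹) = Λm * Λm⁻¹ := by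
    rw [hΛm]; simp only [Matrix.mul_assoc]
  rw [h2, Matrix.trace_mul_comm, h3, Matrix.mul_nonsing_inv _ hΛunit, Matrix.trace_one]
  simp
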